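/- Let L be a Lie algebra over a field k, let z ∈ L be a central element (i.e. [z, x] = 0 for all x ∈ L), and let α ∈ k. Define the linear map φ : L ⊗ L → L ⊗ L by φ(x ⊗ y) = α [x,y] ⊗ z + y ⊗ x. Then φ is a Yang–Baxter operator: it satisfies the braid equation φ¹² ∘ φ²³ ∘ φ¹² = φ²³ ∘ φ¹² ∘ φ²³, and it is invertible with inverse given by φ⁻¹(x ⊗ y) = α z ⊗ [x,y] + y ⊗ x. -/

import Mathlib

open TensorProduct

/-- The twist map `τ : V ⊗ V → V ⊗ V`, `v ⊗ w ↦ w ⊗ v`. -/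
noncomputable def twist (k V : Type*) [Field k] [AddCommGroup V] [Module k V] :
    V ⊗[k] V →ₗ[k] V ⊗[k] V := (TensorProduct.comm k V V).toLinearMap

/-- `R¹² = R ⊗ I` acting on `(V ⊗ V) ⊗ V`. -/
noncomputable def r12 {k V : Type*} [Field k] [AddCommGroup V] [Module k V]
    (R : V ⊗[k] V →ₗ[k] V ⊗[k] V) :
    (V ⊗[k] V) ⊗[k] V →ₗ[k] (V ⊗[k] V) ⊗[k] V :=
  TensorProduct.map R LinearMap.id

/-- `R²³ = I ⊗ R` acting on `(V ⊗ V) ⊗ V`. -/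
noncomputable def r23 {k V : Type*} [Field k] [AddCommGroup V] [Module k V]
    (R : V ⊗[k] V →ₗ[k] V ⊗[k] V) :
    (V ⊗[k] V) ⊗[k] V →ₗ[k] (V ⊗[k] V) ⊗[k] V :=
  (TensorProduct.assoc k V V V).symm.toLinearMap ∘ₗ
    TensorProduct.map LinearMap.id R ∘ₗ (TensorProduct.assoc k V V V).toLinearMap

/-- `I ⊗ τ` acting on `(V ⊗ V) ⊗ V`. -/
noncomputable def iTauI (k V : Type*) [Field k] [AddCommGroup V] [Module k V] :
    (V ⊗[k] V) ⊗[k] V →ₗ[k] (V ⊗[k] V) ⊗[k] V :=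
  (TensorProduct.assoc k V V V).symm.toLinearMap ∘ₗ
    TensorProduct.map LinearMap.id (twist k V) ∘ₗ (TensorProduct.assoc k V V V).toLinearMap

/-- `R¹³ = (I ⊗ τ)(R ⊗ I)(I ⊗ τ)` acting on `(V ⊗ V) ⊗ V`. -/
noncomputable def r13 {k V : Type*} [Field k] [AddCommGroup V] [Module k V]
    (R : V ⊗[k] V →ₗ[k] V ⊗[k] V) :
    (V ⊗[k] V) ⊗[k] V →ₗ[k] (V ⊗[k] V) ⊗[k] V :=
  iTauI k V ∘ₗ r12 R ∘ₗ iTauI k V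

/-- The Lie bracket of `L` as a linear map `L ⊗ L → L`, `x ⊗ y ↦ ⁅x, y⁆`. -/
noncomputable def brLift (k L : Type*) [Field k] [LieRing L] [LieAlgebra k L] :
    L ⊗[k] L →ₗ[k] L :=
  TensorProduct.lift (LinearMap.mk₂ k (fun x y => ⁅x, y⁆)
    (fun x y z => add_lie x y z) (fun c x y => smul_lie c x y)
    (fun x y z => lie_add x y z) (fun c x y => lie_smul c x y))

/-- The braid equation `R¹² R²³ R¹² = R²³ R¹² R²³`. -/
noncomputable def BraidEq {k V : Type*} [Field k] [AddCommGroup V] [Module k V]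
    (R : V ⊗[k] V →ₗ[k] V ⊗[k] V) : Prop :=
  r12 R ∘ₗ r23 R ∘ₗ r12 R = r23 R ∘ₗ r12 R ∘ₗ r23 R

/-- **Theorem (Majid).** For a Lie algebra `L` over `k`, a central element `z ∈ L` and
`α ∈ k`, the map `φ(x ⊗ y) = α ⁅x,y⁆ ⊗ z + y ⊗ x` is a Yang–Baxter operator: it
satisfies the braid equation and is invertible with inverse
`φ⁻¹(x ⊗ y) = α z ⊗ ⁅x,y⁆ + y ⊗ x`. -/
theorem lie_yang_baxter_operator {k L : Type*} [Field k] [LieRing L] [LieAlgebra k L]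
    (z : L) (hz : ∀ x : L, ⁅z, x⁆ = 0) (α : k) :
    let φ : L ⊗[k] L →ₗ[k] L ⊗[k] L :=
      α • (((TensorProduct.mk k L L).flip z) ∘ₗ brLift k L) + twist k L
    let ψ : L ⊗[k] L →ₗ[k] L ⊗[k] L :=
      α • ((TensorProduct.mk k L L z) ∘ₗ brLift k L) + twist k L
    BraidEq φ ∧ φ ∘ₗ ψ = LinearMap.id ∧ ψ ∘ₗ φ = LinearMap.id := by
  intro φ ψ
  have hz' : ∀ x : L, ⁅x, z⁆ = 0 := fun x => by rw [← lie_skew, hz, neg_zero]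
  refine ⟨?_, ?_, ?_⟩
  · unfold BraidEq
    apply TensorProduct.ext
    apply TensorProduct.ext
    ext x y w
    simp only [φ, r12, r23, twist, brLift, iTauI, LinearMap.comp_apply,
      LinearMap.compr₂_apply, LinearMap.compr₂ₛₗ_apply, TensorProduct.mk_apply, TensorProduct.map_tmul,
      LinearMap.id_apply, LinearEquiv.coe_coe, TensorProduct.assoc_tmul,
      TensorProduct.assoc_symm_tmul, TensorProduct.comm_tmul, LinearMap.add_apply,
      LinearMap.smul_apply, TensorProduct.lift.tmul, LinearMap.mk₂_apply,
      LinearMap.flip_apply, hz, hz', TensorProduct.tmul_add, TensorProduct.add_tmul,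
      TensorProduct.smul_tmul', TensorProduct.tmul_smul, map_add, map_smul,
      TensorProduct.zero_tmul, TensorProduct.tmul_zero, smul_zero, zero_add, add_zero,
      lie_lie, TensorProduct.sub_tmul, TensorProduct.tmul_sub, map_sub]
    simp only [smul_sub, TensorProduct.sub_tmul]
    simp only [← TensorProduct.smul_tmul', TensorProduct.tmul_smul]
    module
  · apply TensorProduct.ext
    ext x y
    simp only [φ, ψ, r12, r23, twist, brLift, iTauI, LinearMap.comp_apply,
      LinearMap.compr₂_apply, LinearMap.compr₂ₛₗ_apply, TensorProduct.mk_apply, TensorProduct.map_tmul,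
      LinearMap.id_apply, LinearEquiv.coe_coe, TensorProduct.comm_tmul,
      LinearMap.add_apply, LinearMap.smul_apply, TensorProduct.lift.tmul,
      LinearMap.mk₂_apply, LinearMap.flip_apply, hz, hz', TensorProduct.tmul_add,
      TensorProduct.add_tmul, TensorProduct.smul_tmul', TensorProduct.tmul_smul,
      map_add, map_smul, TensorProduct.zero_tmul, TensorProduct.tmul_zero, smul_zero,
      zero_add, add_zero]
    rw [← lie_skew y x]
    simp only [← TensorProduct.smul_tmul', TensorProduct.tmul_smul,
      TensorProduct.tmul_neg, TensorProduct.neg_tmul, smul_neg]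
    module
  · apply TensorProduct.ext
    ext x y
    simp only [φ, ψ, r12, r23, twist, brLift, iTauI, LinearMap.comp_apply,
      LinearMap.compr₂_apply, LinearMap.compr₂ₛₗ_apply, TensorProduct.mk_apply, TensorProduct.map_tmul,
      LinearMap.id_apply, LinearEquiv.coe_coe, TensorProduct.comm_tmul,
      LinearMap.add_apply, LinearMap.smul_apply, TensorProduct.lift.tmul,
      LinearMap.mk₂_apply, LinearMap.flip_apply, hz, hz', TensorProduct.tmul_add,
      TensorProduct.add_tmul, TensorProduct.smul_tmul', TensorProduct.tmul_smul,
      map_add, map_smul, TensorProduct.zero_tmul, TensorProduct.tmul_zero, smul_zero,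
      zero_add, add_zero]
    rw [← lie_skew y x]
    simp only [← TensorProduct.smul_tmul', TensorProduct.tmul_smul,
      TensorProduct.tmul_neg, TensorProduct.neg_tmul, smul_neg]
    module
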